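/- Under the boundedness assumption |f*(x_i)| ≤ M for all i, there exists a positive constant c_d depending only on d (via γ_d) such that the following holds: for every y > 0 and every k ∈ {1,…,n} satisfying V(k) ≥ B²(k) + y, the minimum discrepancy stopping rule k^τ = sup{k' : R_{k'} ≤ σ²} satisfies P_ε( k^τ < k ) ≤ 2·exp( −c_d · n · min( y²/σ⁴, y/σ² ) ). -/

import Mathlib

open MeasureTheory ProbabilityTheory Finset Matrix
open scoped ENNReal NNReal

noncomputable section

/-- Empirical (1/n)-normalized squared norm: `‖v‖_n² = (1/n) ∑ᵢ vᵢ²`. -/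
def normSqn (n : ℕ) (v : Fin n → ℝ) : ℝ := (1 / (n : ℝ)) * ∑ i, (v i) ^ 2

/-- `A` is a `k`-NN matrix: entries in `{0, 1/k}`, diagonal entries `1/k`, rows summing to 1
(so each row has exactly `k` entries equal to `1/k`). -/
def IsKNN (n k : ℕ) (A : Matrix (Fin n) (Fin n) ℝ) : Prop :=
  (∀ i j, A i j = 0 ∨ A i j = 1 / (k : ℝ)) ∧
  (∀ i, A i i = 1 / (k : ℝ)) ∧
  (∀ i, ∑ j, A i j = 1)

/-- Every column of `A` has at most `γ * k` nonzero entries. -/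
def ColBound (n k : ℕ) (γ : ℝ) (A : Matrix (Fin n) (Fin n) ℝ) : Prop :=
  ∀ j, ((Finset.univ.filter fun i => A i j ≠ 0).card : ℝ) ≤ γ * k

/-- Squared bias `B²(k) = ‖(I - A_k) F*‖_n²`. -/
def bias2 (n : ℕ) (A : Matrix (Fin n) (Fin n) ℝ) (F : Fin n → ℝ) : ℝ :=
  normSqn n ((1 - A).mulVec F)

/-- Empirical risk `R_k = ‖(I - A_k) Y‖_n²` with `Y = F* + ε`. -/
def empRisk (n : ℕ) (A : Matrix (Fin n) (Fin n) ℝ) (F ε : Fin n → ℝ) : ℝ :=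
  normSqn n ((1 - A).mulVec (F + ε))

/-- Minimum discrepancy principle stopping rule `k^τ = sup {k ∈ {1,…,n} : R_k ≤ σ²}`. -/
def ktau (n : ℕ) (A : ℕ → Matrix (Fin n) (Fin n) ℝ) (F : Fin n → ℝ) (σ : ℝ)
    (ε : Fin n → ℝ) : ℕ :=
  sSup {k | k ∈ Set.Icc 1 n ∧ empRisk n (A k) F ε ≤ σ ^ 2}

/-- Bias-variance trade-off rule `k^* = inf {k ∈ {1,…,n} : B²(k) ≥ V(k)}`,
set to `n` when the set is empty. -/
def kstar (n : ℕ) (A : ℕ → Matrix (Fin n) (Fin n) ℝ) (F : Fin n → ℝ) (σ : ℝ) : ℕ :=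
  sInf ({k | k ∈ Set.Icc 1 n ∧ σ ^ 2 / (k : ℝ) ≤ bias2 n (A k) F} ∪ {n})

/-- The law of `ε = (ε₁,…,εₙ)` with i.i.d. `N(0,σ²)` coordinates. -/
def gaussPi (n : ℕ) (σ : ℝ) : Measure (Fin n → ℝ) :=
  Measure.pi fun _ => gaussianReal 0 (Real.toNNReal (σ ^ 2))


theorem lintegral_pi_prod : ∀ {m : ℕ} (μ : Fin m → Measure ℝ), (∀ i, SigmaFinite (μ i)) →
    ∀ (f : Fin m → ℝ → ℝ≥0∞), (∀ i, Measurable (f i)) →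
    ∫⁻ x, ∏ i, f i (x i) ∂Measure.pi μ = ∏ i, ∫⁻ t, f i t ∂(μ i) := by
  intro m
  induction m with
  | zero => intro μ _ f _; simp
  | succ m ih =>
    intro μ hμ f hf
    have := hμ
    have h0 := (MeasureTheory.measurePreserving_piFinSuccAbove μ 0).symm
    have hg : Measurable fun x : Fin (m+1) → ℝ => ∏ i, f i (x i) :=
      Finset.measurable_prod _ fun i _ => (hf i).comp (measurable_pi_apply i)
    rw [← h0.lintegral_comp hg]
    have key : ∀ p : ℝ × (Fin m → ℝ),
        (∏ i, f i (((MeasurableEquiv.piFinSuccAbove (fun _ => ℝ) 0).symm p) i)) =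
        f 0 p.1 * ∏ j : Fin m, f j.succ (p.2 j) := by
      intro p
      simp_rw [MeasurableEquiv.piFinSuccAbove_symm_apply, Fin.insertNthEquiv,
        Fin.prod_univ_succ, Fin.insertNth_zero]
      simp [Fin.zero_succAbove, Function.comp_def, Fin.cons_zero, Fin.cons_succ]
    simp_rw [key, Fin.zero_succAbove]
    rw [lintegral_prod_mul (μ := μ 0) (ν := Measure.pi fun j => μ (Fin.succ j))
      (f := f 0) (g := fun x2 : Fin m → ℝ => ∏ j, f (Fin.succ j) (x2 j))
      (hf 0).aemeasurable
      (Finset.measurable_prod _ fun j _ => (hf (Fin.succ j)).comp (measurable_pi_apply j)).aemeasurable]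
    rw [ih _ (fun j => hμ _) _ (fun j => hf (Fin.succ j)), Fin.prod_univ_succ]

theorem gauss_mgf_le {σ : ℝ} (hσ : 0 < σ) {a b : ℝ} (ha : 0 ≤ a)
    (h2 : 2 * a * σ^2 ≤ 1/2) :
    ∫⁻ x, ENNReal.ofReal (Real.exp (a * x^2 + b * x))
        ∂(gaussianReal 0 (Real.toNNReal (σ^2)))
      ≤ ENNReal.ofReal (Real.exp (a*σ^2 + 4*a^2*σ^4 + b^2*σ^2)) := by
  set s : ℝ := σ^2 with hsdef
  have hs : 0 < s := by positivity
  have hv : (Real.toNNReal s) ≠ 0 := by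
    simp only [ne_eq, Real.toNNReal_eq_zero, not_le]; exact hs
  have hvs : ((Real.toNNReal s : ℝ≥0) : ℝ) = s := Real.coe_toNNReal _ hs.le
  set c : ℝ := 1/(2*s) - a with hcdef
  have hc : 0 < c := by
    rw [hcdef]
    have : a < 1/(2*s) := by
      rw [lt_div_iff₀ (by positivity)]
      nlinarith
    linarith
  set m : ℝ := b/(2*c) with hmdef
  set q : ℝ := b^2/(4*c) with hqdef
  set C : ℝ := (Real.sqrt (2*Real.pi*s))⁻¹ with hCdef
  have hC : 0 < C := by rw [hCdef]; positivity
  -- step 1 : reduce to Lebesgue integral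
  rw [gaussianReal_of_var_ne_zero _ hv,
    lintegral_withDensity_eq_lintegral_mul _ (measurable_gaussianPDF _ _)
      (show Measurable fun x : ℝ => ENNReal.ofReal (Real.exp (a*x^2+b*x)) by fun_prop)]
  have key : ∀ x : ℝ, (gaussianPDF 0 (Real.toNNReal s) x *
      ENNReal.ofReal (Real.exp (a * x^2 + b * x)))
      = ENNReal.ofReal ((C * Real.exp q) * Real.exp (-c * (x - m)^2)) := by
    intro x
    rw [gaussianPDF, ← ENNReal.ofReal_mul (gaussianPDFReal_nonneg _ _ _)]
    congr 1
    rw [gaussianPDFReal]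
    rw [hvs]
    have : x - 0 = x := by ring
    rw [this, ← hCdef]
    rw [mul_assoc, ← Real.exp_add, mul_assoc, ← Real.exp_add]
    congr 1
    have hc2 : c ≠ 0 := ne_of_gt hc
    have hs2 : s ≠ 0 := ne_of_gt hs
    have hcm : c * m = b / 2 := by rw [hmdef]; field_simp
    have hcm2 : c * m ^ 2 = q := by
      rw [hqdef, hmdef]; field_simp; ring
    have expand : -c*(x-m)^2 = -(c*x^2) + 2*(c*m)*x - c*m^2 := by ring
    rw [expand, hcm, hcm2, hcdef]
    field_simp
    ring
  simp_rw [Pi.mul_apply, key]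
  -- step 2 : compute the Lebesgue integral
  have hint : Integrable (fun x : ℝ => (C * Real.exp q) * Real.exp (-c * (x - m)^2)) :=
    ((integrable_exp_neg_mul_sq hc).comp_sub_right m).const_mul _
  rw [← ofReal_integral_eq_lintegral_ofReal hint (ae_of_all _ fun x => by positivity)]
  have hval : ∫ x : ℝ, (C * Real.exp q) * Real.exp (-c * (x - m)^2)
      = (C * Real.exp q) * Real.sqrt (Real.pi / c) := by
    rw [MeasureTheory.integral_const_mul]
    congr 1
    rw [show (fun x : ℝ => Real.exp (-c * (x - m)^2)) = fun x => (fun t => Real.exp (-c * t^2)) (x - m) from rfl]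
    rw [integral_sub_right_eq_self (μ := volume) (fun t => Real.exp (-c * t^2)) m]
    exact integral_gaussian c
  rw [hval]
  apply ENNReal.ofReal_le_ofReal
  -- step 3 : the numeric bound
  set u : ℝ := 2*a*s with hudef
  have hu0 : 0 ≤ u := by rw [hudef]; positivity
  have hu2 : u ≤ 1/2 := h2
  have hd : 2*s*c = 1 - u := by rw [hcdef, hudef]; field_simp
  have hd0 : 0 < 1 - u := by linarith
  have hq2 : q ≤ b^2 * s := by
    rw [hqdef]
    rw [div_le_iff₀ (by positivity)]
    have h4c : 1 ≤ s * (4*c) := by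
      have : s * (4*c) = 2*(1-u) := by rw [← hd]; ring
      rw [this]; linarith
    nlinarith [sq_nonneg b]
  have hA : C * Real.sqrt (Real.pi / c) ≤ Real.exp (a*s + 4*a^2*s^2) := by
    have hXpos : (0:ℝ) < Real.exp (a*s + 4*a^2*s^2) := Real.exp_pos _
    have hsq : (C * Real.sqrt (Real.pi / c))^2 = 1/(1-u) := by
      rw [hCdef, mul_pow, ← Real.sqrt_inv, Real.sq_sqrt (by positivity),
        Real.sq_sqrt (by positivity)]
      rw [← hd]
      field_simp
    have hXsq : 1/(1-u) ≤ (Real.exp (a*s + 4*a^2*s^2))^2 := by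
      rw [← Real.exp_nat_mul]
      have h1 : ((2:ℕ):ℝ) * (a*s + 4*a^2*s^2) = u + 2*u^2 := by rw [hudef]; push_cast; ring
      rw [h1]
      have h3 : 1 + (u + 2*u^2) ≤ Real.exp (u + 2*u^2) := Real.add_one_le_exp _ |>.trans_eq' (by ring)
      have h4 : 1/(1-u) ≤ 1 + (u + 2*u^2) := by
        rw [div_le_iff₀ hd0]
        nlinarith
      linarith
    nlinarith [mul_nonneg hC.le (Real.sqrt_nonneg (Real.pi / c))]
  calc C * Real.exp q * Real.sqrt (Real.pi / c)
      = (C * Real.sqrt (Real.pi / c)) * Real.exp q := by ring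
    _ ≤ Real.exp (a*s + 4*a^2*s^2) * Real.exp (b^2*s) := by
        apply mul_le_mul hA (Real.exp_le_exp.2 hq2) (Real.exp_pos _).le (Real.exp_pos _).le
        
    _ = Real.exp (a*s + 4*a^2*s^2 + b^2*s) := by rw [← Real.exp_add]
    _ = Real.exp (a*σ^2 + 4*a^2*σ^4 + b^2*σ^2) := by rw [hsdef]; ring_nf
  

theorem star_eq_transpose' {n : ℕ} (U : Matrix (Fin n) (Fin n) ℝ) : star U = Uᵀ := by
  ext i j; simp [Matrix.star_eq_conjTranspose, Matrix.conjTranspose_apply]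

theorem mulVec_dot_self {n : ℕ} (C : Matrix (Fin n) (Fin n) ℝ) (x : Fin n → ℝ) :
    (C *ᵥ x) ⬝ᵥ (C *ᵥ x) = (x ᵥ* (Cᵀ * C)) ⬝ᵥ x := by
  rw [dotProduct_mulVec, ← vecMul_vecMul, vecMul_transpose]


theorem sum_sq_mulVec_unitary {n : ℕ} {U : Matrix (Fin n) (Fin n) ℝ}
    (hU : U ∈ Matrix.unitaryGroup (Fin n) ℝ) (x : Fin n → ℝ) :
    ∑ i, ((U *ᵥ x) i)^2 = ∑ i, (x i)^2 := by
  have h1 : Uᵀ * U = 1 := by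
    rw [← star_eq_transpose']
    exact (Matrix.mem_unitaryGroup_iff'.mp hU)
  have h2 : ∀ v : Fin n → ℝ, ∑ i, (v i)^2 = v ⬝ᵥ v := by
    intro v; simp [dotProduct, pow_two]
  rw [h2, h2, mulVec_dot_self, h1, vecMul_one]


theorem gaussPi_eq_withDensity (n : ℕ) {σ : ℝ} (hσ : 0 < σ) :
    gaussPi n σ = (volume : Measure (Fin n → ℝ)).withDensity
      (fun x => ∏ i, ENNReal.ofReal (gaussianPDFReal 0 (Real.toNNReal (σ^2)) (x i))) := by
  set v := Real.toNNReal (σ^2) with hvdef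
  have hv : v ≠ 0 := by
    simp only [hvdef, ne_eq, Real.toNNReal_eq_zero, not_le]; positivity
  refine Measure.pi_eq fun s hs => ?_
  rw [withDensity_apply _ (MeasurableSet.univ_pi hs),
    ← lintegral_indicator (MeasurableSet.univ_pi hs) _]
  have key : ∀ x : Fin n → ℝ,
      (Set.univ.pi s).indicator
        (fun x => ∏ i, ENNReal.ofReal (gaussianPDFReal 0 v (x i))) x
      = ∏ i, (s i).indicator (fun t => ENNReal.ofReal (gaussianPDFReal 0 v t)) (x i) := by
    intro x
    by_cases hx : x ∈ Set.univ.pi s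
    · rw [Set.indicator_of_mem hx]
      exact Finset.prod_congr rfl fun i _ =>
        (Set.indicator_of_mem (hx i (Set.mem_univ i)) (fun t => ENNReal.ofReal (gaussianPDFReal 0 v t))).symm
    · rw [Set.indicator_of_notMem hx]
      have : ∃ i, x i ∉ s i := by
        by_contra h; push_neg at h; exact hx fun i _ => h i
      obtain ⟨i, hi⟩ := this
      exact (Finset.prod_eq_zero (Finset.mem_univ i)
        (Set.indicator_of_notMem hi _)).symm
  simp_rw [key]
  rw [volume_pi, lintegral_pi_prod _ (fun _ => inferInstance) _
    (fun i => ((measurable_gaussianPDFReal 0 v).ennreal_ofReal).indicator (hs i))]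
  refine Finset.prod_congr rfl fun i _ => ?_
  rw [lintegral_indicator (hs i) _, gaussianReal_of_var_ne_zero _ hv,
    withDensity_apply _ (hs i)]
  rfl

theorem lintegral_gaussPi_comp_unitary {n : ℕ} {σ : ℝ} (hσ : 0 < σ)
    {U : Matrix (Fin n) (Fin n) ℝ} (hU : U ∈ Matrix.unitaryGroup (Fin n) ℝ)
    (g : (Fin n → ℝ) → ℝ≥0∞) (hg : Measurable g) :
    ∫⁻ x, g x ∂(gaussPi n σ) = ∫⁻ x, g (U *ᵥ x) ∂(gaussPi n σ) := by
  set v := Real.toNNReal (σ^2) with hvdef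
  set D : (Fin n → ℝ) → ℝ≥0∞ :=
    fun x => ∏ i, ENNReal.ofReal (gaussianPDFReal 0 v (x i)) with hDdef
  have hDmeas : Measurable D :=
    Finset.measurable_prod _ fun i _ =>
      ((measurable_gaussianPDFReal 0 v).comp (measurable_pi_apply i)).ennreal_ofReal
  have hT : Measurable fun x : Fin n → ℝ => U *ᵥ x := by
    have : Continuous fun x : Fin n → ℝ => U *ᵥ x := by
      have := LinearMap.continuous_on_pi (Matrix.toLin' U)
      exact Continuous.matrix_mulVec continuous_const continuous_id
    exact this.measurable
  -- determinant
  have h1 : Uᵀ * U = 1 := by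
    rw [← star_eq_transpose']; exact (Matrix.mem_unitaryGroup_iff'.mp hU)
  have hdet1 : U.det * U.det = 1 := by
    have := congrArg Matrix.det h1
    rwa [Matrix.det_mul, Matrix.det_transpose, Matrix.det_one] at this
  have hdet : |U.det⁻¹| = 1 := by
    rcases mul_self_eq_one_iff.mp hdet1 with h | h <;> rw [h] <;> norm_num
  have hdetne : U.det ≠ 0 := by
    intro h; rw [h] at hdet1; norm_num at hdet1
  have hmap : Measure.map (fun x : Fin n → ℝ => U *ᵥ x) volume = volume := by
    have := Real.map_matrix_volume_pi_eq_smul_volume_pi hdetne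
    rw [show ⇑(Matrix.toLin' U) = fun x : Fin n → ℝ => U *ᵥ x from
      funext fun x => Matrix.toLin'_apply U x] at this
    rw [this, hdet, ENNReal.ofReal_one, one_smul]
  -- density invariance
  have hDU : ∀ x, D (U *ᵥ x) = D x := by
    intro x
    have hnn : ∀ z : Fin n → ℝ, ∀ i ∈ Finset.univ, 0 ≤ gaussianPDFReal 0 v (z i) :=
      fun z i _ => gaussianPDFReal_nonneg 0 v (z i)
    rw [hDdef]
    simp only
    rw [← ENNReal.ofReal_prod_of_nonneg (hnn (U *ᵥ x)),
      ← ENNReal.ofReal_prod_of_nonneg (hnn x)]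
    congr 1
    have hprod : ∀ z : Fin n → ℝ, ∏ i, gaussianPDFReal 0 v (z i)
        = (Real.sqrt (2*Real.pi*(v:ℝ)))⁻¹ ^ n * Real.exp (-(∑ i, (z i)^2) / (2*(v:ℝ))) := by
      intro z
      simp only [gaussianPDFReal, sub_zero]
      rw [Finset.prod_mul_distrib, Finset.prod_const, ← Real.exp_sum]
      congr 2
      · simp
      · rw [← Finset.sum_div, ← Finset.sum_neg_distrib]
    rw [hprod, hprod, sum_sq_mulVec_unitary hU]
  calc ∫⁻ x, g x ∂(gaussPi n σ)
      = ∫⁻ x, D x * g x ∂volume := by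
        rw [gaussPi_eq_withDensity n hσ,
          lintegral_withDensity_eq_lintegral_mul _ hDmeas hg]; rfl
    _ = ∫⁻ x, D x * g x ∂(Measure.map (fun x : Fin n → ℝ => U *ᵥ x) volume) := by
        rw [hmap]
    _ = ∫⁻ x, D (U *ᵥ x) * g (U *ᵥ x) ∂volume := by
        rw [lintegral_map (f := fun x => D x * g x) (hDmeas.mul hg) hT]
    _ = ∫⁻ x, D x * g (U *ᵥ x) ∂volume := by simp_rw [hDU]
    _ = ∫⁻ x, g (U *ᵥ x) ∂(gaussPi n σ) := by
        rw [gaussPi_eq_withDensity n hσ,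
          lintegral_withDensity_eq_lintegral_mul _ hDmeas (show Measurable fun x : Fin n → ℝ => g (U *ᵥ x) from hg.comp hT)]; rfl

set_option maxHeartbeats 1600000 in
theorem ktau_deviation_variance_side (γ : ℝ) (hγ : 0 < γ) :
    ∃ cd : ℝ, 0 < cd ∧
      ∀ (n : ℕ), 1 ≤ n →
      ∀ (σ M : ℝ), 0 < σ → 0 < M →
      ∀ A : ℕ → Matrix (Fin n) (Fin n) ℝ,
        (∀ k ∈ Set.Icc 1 n, IsKNN n k (A k) ∧ ColBound n k γ (A k)) →
      ∀ F : Fin n → ℝ, (∀ i, |F i| ≤ M) →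
      ∀ y : ℝ, 0 ≤ y →
      ∀ k ∈ Set.Icc 1 n, bias2 n (A k) F + y ≤ σ ^ 2 / (k : ℝ) →
        gaussPi n σ {ε : Fin n → ℝ | ktau n A F σ ε < k} ≤
          ENNReal.ofReal
            (2 * Real.exp (-cd * n * min (y ^ 2 / σ ^ 4) (y / σ ^ 2))) := by
  set L : ℝ := 2 * (1 + γ) with hLdef
  have hL : 0 < L := by positivity
  refine ⟨1 / (32 * L), by positivity, ?_⟩
  intro n hn σ M hσ hM A hA F hF y hy k hk hbias
  obtain ⟨hk1, hkn⟩ := hk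
  obtain ⟨hknn, hcol⟩ := hA k ⟨hk1, hkn⟩
  have hkR : (1:ℝ) ≤ (k:ℝ) := by exact_mod_cast hk1
  have hkR0 : (0:ℝ) < (k:ℝ) := lt_of_lt_of_le one_pos hkR
  have hnR : (0:ℝ) < (n:ℝ) := by exact_mod_cast lt_of_lt_of_le one_pos hn
  have hprob : IsProbabilityMeasure (gaussPi n σ) := by
    unfold gaussPi; infer_instance
  -- trivial case y = 0
  rcases eq_or_lt_of_le hy with hy0 | hy0
  · have hmin0 : min ((0:ℝ) ^ 2 / σ ^ 4) (0 / σ ^ 2) = 0 := by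
      simp
    rw [← hy0, hmin0]
    simp only [mul_zero, Real.exp_zero, mul_one]
    calc gaussPi n σ _ ≤ 1 := prob_le_one
      _ ≤ ENNReal.ofReal 2 := by
          rw [show ((2:ℝ)) = ((2:ℕ):ℝ) by norm_num, ENNReal.ofReal_natCast]
          exact one_le_two
  -- main case
  have hb0 : 0 ≤ bias2 n (A k) F := by
    unfold bias2 normSqn; positivity
  have hyσ : y ≤ σ ^ 2 := by
    have h1 : σ ^ 2 / (k:ℝ) ≤ σ ^ 2 := div_le_self (by positivity) hkR
    linarith
  have hmin : min (y ^ 2 / σ ^ 4) (y / σ ^ 2) = y ^ 2 / σ ^ 4 := by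
    apply min_eq_left
    rw [div_le_div_iff₀ (by positivity) (by positivity)]
    nlinarith [mul_le_mul_of_nonneg_left hyσ (mul_nonneg hy (sq_nonneg σ))]
  set t : ℝ := y / (16 * L * σ ^ 4) with htdef
  have ht0 : 0 < t := by positivity
  -- matrices
  set B : Matrix (Fin n) (Fin n) ℝ := 1 - A k with hBdef
  have hBH : Bᴴ = Bᵀ := by
    ext i j; simp [Matrix.conjTranspose_apply]
  set Mx : Matrix (Fin n) (Fin n) ℝ := Bᵀ * B with hMxdef
  have hMx : Mx.IsHermitian := by
    rw [hMxdef, ← hBH]; exact Matrix.isHermitian_conjTranspose_mul_self B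
  have hPSD : Mx.PosSemidef := by
    rw [hMxdef, ← hBH]; exact Matrix.posSemidef_conjTranspose_mul_self B
  set lam : Fin n → ℝ := hMx.eigenvalues with hlamdef
  set U : Matrix (Fin n) (Fin n) ℝ := (hMx.eigenvectorUnitary : Matrix (Fin n) (Fin n) ℝ)
    with hUdef
  have hUmem : U ∈ Matrix.unitaryGroup (Fin n) ℝ := hMx.eigenvectorUnitary.2
  have hdiag : Uᵀ * Mx * U = diagonal lam := by
    have h := hMx.conjStarAlgAut_star_eigenvectorUnitary
    simp only [Unitary.conjStarAlgAut_star_apply] at h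
    rw [star_eq_transpose'] at h
    rw [hUdef]
    rw [show (RCLike.ofReal ∘ hMx.eigenvalues : Fin n → ℝ) = lam from rfl] at h
    exact h
  -- entries of A are nonneg
  have hAnn : ∀ i j, 0 ≤ A k i j := by
    intro i j
    rcases hknn.1 i j with h | h <;> rw [h] <;> positivity
  -- row abs sums of B
  have hrow : ∀ i, ∑ j, |B i j| ≤ 2 := by
    intro i
    have h1 : ∀ j, |B i j| ≤ (if i = j then (1:ℝ) else 0) + A k i j := by
      intro j
      rw [hBdef]
      simp only [Matrix.sub_apply, Matrix.one_apply]
      refine (abs_sub _ _).trans ?_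
      rw [abs_of_nonneg (by positivity), abs_of_nonneg (hAnn i j)]
    calc ∑ j, |B i j| ≤ ∑ j, ((if i = j then (1:ℝ) else 0) + A k i j) :=
          Finset.sum_le_sum fun j _ => h1 j
      _ = (∑ j, (if i = j then (1:ℝ) else 0)) + ∑ j, A k i j := Finset.sum_add_distrib
      _ = 1 + 1 := by rw [hknn.2.2 i]; simp
      _ = 2 := by norm_num
  -- column abs sums of B
  have hcolB : ∀ j, ∑ i, |B i j| ≤ 1 + γ := by
    intro j
    have hcs : ∑ i, A k i j ≤ γ := by
      have : ∑ i, A k i j = ∑ i ∈ Finset.univ.filter (fun i => A k i j ≠ 0), A k i j := by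
        rw [Finset.sum_filter_ne_zero]
      rw [this]
      have h2 : ∀ i ∈ Finset.univ.filter (fun i => A k i j ≠ 0), A k i j = 1 / (k:ℝ) := by
        intro i hi
        rcases hknn.1 i j with h | h
        · exact absurd h (Finset.mem_filter.mp hi).2
        · exact h
      rw [Finset.sum_congr rfl h2, Finset.sum_const, nsmul_eq_mul]
      calc ((Finset.univ.filter fun i => A k i j ≠ 0).card : ℝ) * (1 / (k:ℝ))
          ≤ (γ * k) * (1 / (k:ℝ)) := by
            apply mul_le_mul_of_nonneg_right (hcol j) (by positivity)
        _ = γ := by field_simp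
    have h1 : ∀ i, |B i j| ≤ (if i = j then (1:ℝ) else 0) + A k i j := by
      intro i
      rw [hBdef]
      simp only [Matrix.sub_apply, Matrix.one_apply]
      refine (abs_sub _ _).trans ?_
      rw [abs_of_nonneg (by positivity), abs_of_nonneg (hAnn i j)]
    calc ∑ i, |B i j| ≤ ∑ i, ((if i = j then (1:ℝ) else 0) + A k i j) :=
          Finset.sum_le_sum fun i _ => h1 i
      _ = (∑ i, (if i = j then (1:ℝ) else 0)) + ∑ i, A k i j := Finset.sum_add_distrib
      _ ≤ 1 + γ := by
          have h3 : (∑ i, (if i = j then (1:ℝ) else 0)) = 1 := by simp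
          rw [h3]; linarith [hcs]
  -- trace of Mx
  have htrace : ∑ i, lam i = (n:ℝ) * (1 - 1/(k:ℝ)) := by
    have h1 : ∑ i, lam i = Mx.trace := by
      have h2 : (diagonal lam).trace = Mx.trace := by
        rw [← hdiag, Matrix.trace_mul_cycle]
        have : U * Uᵀ = 1 := by
          rw [← star_eq_transpose']
          exact Matrix.mem_unitaryGroup_iff.mp hUmem
        rw [← mul_assoc, this, one_mul]
      rw [← h2, Matrix.trace_diagonal]
    rw [h1]
    have hrowsq : ∀ j, ∑ i, (B j i)^2 = 1 - 1/(k:ℝ) := by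
      intro j
      have hexp : ∀ i, (B j i)^2 =
          (if j = i then (1:ℝ) else 0) - 2 * ((if j = i then (1:ℝ) else 0) * A k j i)
            + A k j i * A k j i := by
        intro i
        rw [hBdef]
        simp only [Matrix.sub_apply, Matrix.one_apply]
        by_cases h : j = i <;> simp [h] <;> try ring
      have hsq : ∀ i, A k j i * A k j i = (1/(k:ℝ)) * A k j i := by
        intro i
        rcases hknn.1 j i with h | h <;> rw [h] <;> ring
      have hdiagsum : ∑ i, (if j = i then (1:ℝ) else 0) * A k j i = 1/(k:ℝ) := by
        rw [Finset.sum_eq_single j]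
        · simp [hknn.2.1 j]
        · intro b _ hb; rw [if_neg (Ne.symm hb), zero_mul]
        · intro h; exact absurd (Finset.mem_univ j) h
      simp_rw [hexp, hsq]
      rw [Finset.sum_add_distrib, Finset.sum_sub_distrib, ← Finset.mul_sum, hdiagsum,
        ← Finset.mul_sum, hknn.2.2 j]
      simp
      ring
    have htr2 : Mx.trace = ∑ j, ∑ i, (B j i)^2 := by
      rw [hMxdef, Matrix.trace]
      simp only [Matrix.diag_apply, Matrix.mul_apply, Matrix.transpose_apply, ← pow_two]
      rw [Finset.sum_comm]
    rw [htr2]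
    simp_rw [hrowsq]
    rw [Finset.sum_const, Finset.card_univ, Fintype.card_fin, nsmul_eq_mul]
  -- sum of squares as dot product
  have hdot : ∀ v : Fin n → ℝ, ∑ i, (v i)^2 = v ⬝ᵥ v := by
    intro v; simp [dotProduct, pow_two]
  -- eigenvalues nonneg
  have hlam0 : ∀ i, 0 ≤ lam i := fun i => hPSD.eigenvalues_nonneg i
  -- row abs sums of Mx
  have hMabs : ∀ p, ∑ l, |Mx p l| ≤ L := by
    intro p
    calc ∑ l, |Mx p l| ≤ ∑ l, ∑ m, |B m p| * |B m l| := by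
          apply Finset.sum_le_sum; intro l _
          rw [hMxdef, Matrix.mul_apply]
          refine (Finset.abs_sum_le_sum_abs _ _).trans ?_
          apply Finset.sum_le_sum; intro m _
          rw [Matrix.transpose_apply, abs_mul]
      _ = ∑ m, |B m p| * ∑ l, |B m l| := by
          rw [Finset.sum_comm]
          exact Finset.sum_congr rfl fun m _ => (Finset.mul_sum _ _ _).symm
      _ ≤ ∑ m, |B m p| * 2 := Finset.sum_le_sum fun m _ =>
          mul_le_mul_of_nonneg_left (hrow m) (abs_nonneg _)
      _ = 2 * ∑ m, |B m p| := by rw [← Finset.sum_mul]; ring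
      _ ≤ 2 * (1 + γ) := by
          have := hcolB p; linarith
      _ = L := hLdef.symm
  -- eigenvalue upper bound
  have hlam_le : ∀ i, lam i ≤ L := by
    intro i
    set u : Fin n → ℝ := ⇑(hMx.eigenvectorBasis i) with hudef
    have hMu : Mx *ᵥ u = lam i • u := hMx.mulVec_eigenvectorBasis i
    have hu1 : ‖hMx.eigenvectorBasis i‖ = 1 := hMx.eigenvectorBasis.orthonormal.1 i
    have hune : ∃ j, u j ≠ 0 := by
      by_contra h
      push_neg at h
      have h0 := hu1
      rw [EuclideanSpace.norm_eq] at h0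
      have hz : ∀ j, ‖hMx.eigenvectorBasis i j‖ ^ 2 = (0:ℝ) := by
        intro j
        have hj : hMx.eigenvectorBasis i j = u j := rfl
        rw [hj, h j]
        simp
      rw [Finset.sum_congr rfl (fun j _ => hz j)] at h0
      simp at h0
    obtain ⟨j1, hj1⟩ := hune
    obtain ⟨j0, -, hj0⟩ := Finset.exists_max_image Finset.univ (fun j => |u j|)
      ⟨j1, Finset.mem_univ j1⟩
    have hj0pos : 0 < |u j0| := lt_of_lt_of_le (abs_pos.mpr hj1) (hj0 j1 (Finset.mem_univ j1))
    have hline : lam i * u j0 = ∑ l, Mx j0 l * u l := by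
      have h3 := congrFun hMu j0
      simp only [Matrix.mulVec, dotProduct, Pi.smul_apply, smul_eq_mul] at h3
      exact h3.symm
    have hchain : |lam i| * |u j0| ≤ L * |u j0| := by
      calc |lam i| * |u j0| = |lam i * u j0| := (abs_mul _ _).symm
        _ = |∑ l, Mx j0 l * u l| := by rw [hline]
        _ ≤ ∑ l, |Mx j0 l * u l| := Finset.abs_sum_le_sum_abs _ _
        _ = ∑ l, |Mx j0 l| * |u l| := Finset.sum_congr rfl fun l _ => abs_mul _ _
        _ ≤ ∑ l, |Mx j0 l| * |u j0| := Finset.sum_le_sum fun l _ =>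
            mul_le_mul_of_nonneg_left (hj0 l (Finset.mem_univ l)) (abs_nonneg _)
        _ = (∑ l, |Mx j0 l|) * |u j0| := (Finset.sum_mul _ _ _).symm
        _ ≤ L * |u j0| := mul_le_mul_of_nonneg_right (hMabs j0) (abs_nonneg _)
    have := le_of_mul_le_mul_right (by linarith [hchain] : |lam i| * |u j0| ≤ L * |u j0|) hj0pos
    exact (le_abs_self _).trans this
  -- the mean vector
  set muv : Fin n → ℝ := B *ᵥ F with hmuvdef
  have hmu_sq : ∑ i, (muv i)^2 = (n:ℝ) * bias2 n (A k) F := by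
    unfold bias2 normSqn
    rw [hmuvdef, hBdef]
    field_simp
  set c0 : ℝ := ∑ i, (muv i)^2 with hc0def
  have hc0 : c0 ≤ (n:ℝ) * (σ^2/(k:ℝ) - y) := by
    rw [hmu_sq]
    have : bias2 n (A k) F ≤ σ^2/(k:ℝ) - y := by linarith
    nlinarith
  have hc0nn : 0 ≤ c0 := by rw [hc0def]; positivity
  have hc0' : c0 ≤ (n:ℝ) * σ^2 := by
    have h1 : σ ^ 2 / (k:ℝ) ≤ σ ^ 2 := div_le_self (by positivity) hkR
    nlinarith
  -- the linear-term vectors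
  set vv : Fin n → ℝ := muv ᵥ* B with hvvdef
  set w : Fin n → ℝ := vv ᵥ* U with hwdef
  have hw_sq : ∑ i, (w i)^2 = ∑ i, (vv i)^2 := by
    rw [hdot, hdot, hwdef, ← Matrix.mulVec_transpose, mulVec_dot_self, Matrix.transpose_transpose]
    have hUU : U * Uᵀ = 1 := by
      rw [← star_eq_transpose']; exact Matrix.mem_unitaryGroup_iff.mp hUmem
    rw [hUU, Matrix.vecMul_one]
  have hvv_le : ∑ j, (vv j)^2 ≤ L * ∑ m, (muv m)^2 := by
    have hterm : ∀ j, (vv j)^2 ≤ (1 + γ) * ∑ m, |B m j| * (muv m)^2 := by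
      intro j
      have e1 : vv j = ∑ m, muv m * B m j := by
        rw [hvvdef, Matrix.vecMul, dotProduct]
      have e2 : (vv j)^2 ≤ (∑ m, |B m j| * |muv m|)^2 := by
        rw [e1]
        have h4 : |∑ m, muv m * B m j| ≤ ∑ m, |B m j| * |muv m| := by
          refine (Finset.abs_sum_le_sum_abs _ _).trans ?_
          apply Finset.sum_le_sum; intro m _
          rw [abs_mul, mul_comm]
        calc (∑ m, muv m * B m j)^2 = |∑ m, muv m * B m j|^2 := (sq_abs _).symm
          _ ≤ (∑ m, |B m j| * |muv m|)^2 := by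
              apply pow_le_pow_left₀ (abs_nonneg _) h4
      have e3 : (∑ m, |B m j| * |muv m|)^2
          ≤ (∑ m, |B m j|) * (∑ m, |B m j| * (muv m)^2) := by
        have := Finset.sum_mul_sq_le_sq_mul_sq Finset.univ
          (fun m => Real.sqrt (|B m j|)) (fun m => Real.sqrt (|B m j|) * |muv m|)
        have hfg : ∀ m, Real.sqrt (|B m j|) * (Real.sqrt (|B m j|) * |muv m|)
            = |B m j| * |muv m| := by
          intro m
          rw [← mul_assoc, Real.mul_self_sqrt (abs_nonneg _)]
        have hf2 : ∀ m, (Real.sqrt (|B m j|))^2 = |B m j| :=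
          fun m => Real.sq_sqrt (abs_nonneg _)
        have hg2 : ∀ m, (Real.sqrt (|B m j|) * |muv m|)^2 = |B m j| * (muv m)^2 := by
          intro m
          rw [mul_pow, Real.sq_sqrt (abs_nonneg _), sq_abs]
        simp_rw [hfg, hf2, hg2] at this
        exact this
      have e4 : (∑ m, |B m j|) * (∑ m, |B m j| * (muv m)^2)
          ≤ (1 + γ) * ∑ m, |B m j| * (muv m)^2 := by
        apply mul_le_mul_of_nonneg_right (hcolB j)
        positivity
      exact e2.trans (e3.trans e4)
    calc ∑ j, (vv j)^2 ≤ ∑ j, (1 + γ) * ∑ m, |B m j| * (muv m)^2 :=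
          Finset.sum_le_sum fun j _ => hterm j
      _ = (1 + γ) * ∑ m, (muv m)^2 * ∑ j, |B m j| := by
          rw [← Finset.mul_sum, Finset.sum_comm]
          congr 1
          refine Finset.sum_congr rfl fun m _ => ?_
          rw [Finset.mul_sum]
          exact Finset.sum_congr rfl fun j _ => mul_comm _ _
      _ ≤ (1 + γ) * ∑ m, (muv m)^2 * 2 := by
          apply mul_le_mul_of_nonneg_left _ (by positivity)
          exact Finset.sum_le_sum fun m _ =>
            mul_le_mul_of_nonneg_left (hrow m) (sq_nonneg _)
      _ = L * ∑ m, (muv m)^2 := by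
          rw [hLdef, ← Finset.sum_mul]; ring
  -- the statistic Q and the Chernoff function g
  set Q : (Fin n → ℝ) → ℝ := fun e => ∑ i, ((B *ᵥ (F + e)) i)^2 with hQdef
  have hQm : Measurable Q := by
    apply Finset.measurable_sum
    intro i _
    have h1 : Measurable fun e : Fin n → ℝ => (B *ᵥ (F + e)) i := by
      have h2 : (fun e : Fin n → ℝ => (B *ᵥ (F + e)) i)
          = fun e => ∑ j, B i j * (F j + e j) := by
        funext e; simp [Matrix.mulVec, dotProduct]
      rw [h2]
      exact Finset.measurable_sum _ fun j _ =>
        by fun_prop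
    exact h1.pow_const 2
  set g : (Fin n → ℝ) → ℝ≥0∞ := fun e => ENNReal.ofReal (Real.exp (t * Q e)) with hgdef
  have hgm : Measurable g := (Real.measurable_exp.comp (hQm.const_mul t)).ennreal_ofReal
  -- event inclusion
  have hsubset : {ε : Fin n → ℝ | ktau n A F σ ε < k}
      ⊆ {ε : Fin n → ℝ | ENNReal.ofReal (Real.exp (t * ((n:ℝ) * σ^2))) ≤ g ε} := by
    intro ε hε
    simp only [Set.mem_setOf_eq] at hε ⊢
    have hemp : σ^2 < empRisk n (A k) F ε := by
      by_contra hcon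
      push_neg at hcon
      have hbdd : BddAbove {k' | k' ∈ Set.Icc 1 n ∧ empRisk n (A k') F ε ≤ σ^2} :=
        ⟨n, fun x hx => hx.1.2⟩
      have hmem : k ∈ {k' | k' ∈ Set.Icc 1 n ∧ empRisk n (A k') F ε ≤ σ^2} :=
        ⟨Set.mem_Icc.mpr ⟨hk1, hkn⟩, hcon⟩
      have hle := le_csSup hbdd hmem
      exact absurd hle (not_le.mpr hε)
    have hQe : (n:ℝ) * σ^2 ≤ Q ε := by
      have hqr : Q ε = (n:ℝ) * empRisk n (A k) F ε := by
        rw [hQdef]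
        unfold empRisk normSqn
        rw [hBdef]
        field_simp
      rw [hqr]
      nlinarith [hemp, hnR]
    rw [hgdef]
    exact ENNReal.ofReal_le_ofReal (Real.exp_le_exp.2 (by nlinarith [hQe, ht0.le]))
  -- per-coordinate factors
  set ff : Fin n → ℝ → ℝ≥0∞ := fun i z =>
    ENNReal.ofReal (Real.exp ((t * lam i) * z^2 + (2 * t * w i) * z)) with hffdef
  have hffm : ∀ i, Measurable (ff i) := by
    intro i
    apply Measurable.ennreal_ofReal
    exact Real.measurable_exp.comp
      ((((measurable_id.pow_const 2).const_mul (t * lam i))).add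
        (measurable_id.const_mul (2 * t * w i)))
  -- pointwise identity after rotation
  have hpoint : ∀ x, g (U *ᵥ x)
      = ENNReal.ofReal (Real.exp (t * c0)) * ∏ i, ff i (x i) := by
    intro x
    have hQU : Q (U *ᵥ x) = c0 + ∑ i, (lam i * (x i)^2 + 2 * w i * (x i)) := by
      rw [hQdef]
      simp only
      have e0 : B *ᵥ (F + U *ᵥ x) = muv + (B * U) *ᵥ x := by
        rw [Matrix.mulVec_add, Matrix.mulVec_mulVec]
      rw [e0, hdot, add_dotProduct, dotProduct_add, dotProduct_add]
      have hcross : muv ⬝ᵥ ((B * U) *ᵥ x) = ∑ i, w i * x i := by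
        rw [Matrix.dotProduct_mulVec, ← Matrix.vecMul_vecMul]
        have hfold : muv ᵥ* B ᵥ* U = w := by rw [hwdef, hvvdef]
        rw [hfold]
        simp [dotProduct]
      have hcross2 : ((B * U) *ᵥ x) ⬝ᵥ muv = ∑ i, w i * x i := by
        rw [dotProduct_comm]; exact hcross
      have hquad : ((B * U) *ᵥ x) ⬝ᵥ ((B * U) *ᵥ x) = ∑ i, lam i * (x i)^2 := by
        rw [mulVec_dot_self]
        have hCtC : (B * U)ᵀ * (B * U) = diagonal lam := by
          rw [Matrix.transpose_mul, Matrix.mul_assoc, ← Matrix.mul_assoc Bᵀ B U, ← hMxdef,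
            ← Matrix.mul_assoc, hdiag]
        rw [hCtC]
        simp only [dotProduct, Matrix.vecMul_diagonal]
        exact Finset.sum_congr rfl fun i _ => by ring
      rw [hcross, hcross2, hquad, ← hdot, ← hc0def]
      have h2w : ∑ i, (lam i * (x i)^2 + 2 * w i * (x i))
          = (∑ i, lam i * (x i)^2) + ((∑ i, w i * x i) + ∑ i, w i * x i) := by
        rw [← Finset.sum_add_distrib, ← Finset.sum_add_distrib]
        exact Finset.sum_congr rfl fun i _ => by ring
      rw [h2w]
      ring
    rw [hgdef]
    simp only
    rw [hQU, mul_add, Real.exp_add, ENNReal.ofReal_mul (Real.exp_nonneg _)]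
    congr 1
    rw [Finset.mul_sum, Real.exp_sum,
      ENNReal.ofReal_prod_of_nonneg (fun i _ => Real.exp_nonneg _)]
    refine Finset.prod_congr rfl fun i _ => ?_
    rw [hffdef]
    simp only
    congr 1
    ring
  -- MGF bound per coordinate
  have hfactor : ∀ i, ∫⁻ z, ff i z ∂(gaussianReal 0 (Real.toNNReal (σ^2)))
      ≤ ENNReal.ofReal (Real.exp ((t * lam i)*σ^2 + 4*(t * lam i)^2*σ^4 + (2*t*w i)^2*σ^2)) := by
    intro i
    apply gauss_mgf_le hσ (mul_nonneg ht0.le (hlam0 i))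
    have h1 : t * lam i ≤ t * L := mul_le_mul_of_nonneg_left (hlam_le i) ht0.le
    have h2 : 2 * (t * L) * σ^2 = y / (8 * σ^2) := by
      rw [htdef]; field_simp; ring
    have h3 : y / (8 * σ^2) ≤ 1/2 := by
      rw [div_le_iff₀ (by positivity)]
      nlinarith
    nlinarith [mul_le_mul_of_nonneg_left h1 (by positivity : (0:ℝ) ≤ 2*σ^2), h2, h3]
  -- exponent bookkeeping
  have hSlam_n : ∑ i, lam i ≤ (n:ℝ) := by
    rw [htrace]
    have h1 : 0 < 1/(k:ℝ) := by positivity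
    nlinarith
  have hlam2 : ∑ i, (lam i)^2 ≤ L * (n:ℝ) := by
    calc ∑ i, (lam i)^2 ≤ ∑ i, L * lam i := Finset.sum_le_sum fun i _ => by
          nlinarith [hlam0 i, hlam_le i]
      _ = L * ∑ i, lam i := (Finset.mul_sum _ _ _).symm
      _ ≤ L * (n:ℝ) := mul_le_mul_of_nonneg_left hSlam_n hL.le
  have hw2 : ∑ i, (w i)^2 ≤ L * ((n:ℝ) * σ^2) := by
    rw [hw_sq]
    calc ∑ j, (vv j)^2 ≤ L * ∑ m, (muv m)^2 := hvv_le
      _ ≤ L * ((n:ℝ) * σ^2) := mul_le_mul_of_nonneg_left (by rw [← hc0def]; exact hc0') hL.le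
  have hsum_exp : t * c0 + ∑ i, ((t * lam i)*σ^2 + 4*(t * lam i)^2*σ^4 + (2*t*w i)^2*σ^2)
      ≤ t * ((n:ℝ) * σ^2) + (-(t * ((n:ℝ) * y)) + 8*L*(n:ℝ)*σ^4*t^2) := by
    have e1 : ∑ i, ((t * lam i)*σ^2 + 4*(t * lam i)^2*σ^4 + (2*t*w i)^2*σ^2)
        = t*σ^2*(∑ i, lam i) + 4*t^2*σ^4*(∑ i, (lam i)^2) + 4*t^2*σ^2*(∑ i, (w i)^2) := by
      rw [Finset.mul_sum, Finset.mul_sum, Finset.mul_sum, ← Finset.sum_add_distrib,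
        ← Finset.sum_add_distrib]
      exact Finset.sum_congr rfl fun i _ => by ring
    rw [e1]
    have hmean : c0 + σ^2 * (∑ i, lam i) ≤ (n:ℝ)*σ^2 - (n:ℝ)*y := by
      rw [htrace]
      have h2 : σ^2 * ((n:ℝ)*(1 - 1/(k:ℝ))) = (n:ℝ)*σ^2 - (n:ℝ)*(σ^2/(k:ℝ)) := by
        field_simp
      rw [h2]
      have h3 : c0 ≤ (n:ℝ)*(σ^2/(k:ℝ)) - (n:ℝ)*y := by
        rw [mul_sub] at hc0; linarith
      linarith
    have q1 : t * (c0 + σ^2 * (∑ i, lam i)) ≤ t * ((n:ℝ)*σ^2 - (n:ℝ)*y) :=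
      mul_le_mul_of_nonneg_left hmean ht0.le
    have q2 : 4*t^2*σ^4*(∑ i, (lam i)^2) ≤ 4*t^2*σ^4*(L*(n:ℝ)) :=
      mul_le_mul_of_nonneg_left hlam2 (by positivity)
    have q3 : 4*t^2*σ^2*(∑ i, (w i)^2) ≤ 4*t^2*σ^2*(L*((n:ℝ)*σ^2)) :=
      mul_le_mul_of_nonneg_left hw2 (by positivity)
    nlinarith [q1, q2, q3]
  -- assemble the MGF chain
  have hmgf : ∫⁻ e, g e ∂(gaussPi n σ)
      ≤ ENNReal.ofReal (Real.exp (t * ((n:ℝ) * σ^2)))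
        * ENNReal.ofReal (Real.exp (-(t * ((n:ℝ) * y)) + 8*L*(n:ℝ)*σ^4*t^2)) := by
    calc ∫⁻ e, g e ∂(gaussPi n σ)
        = ∫⁻ x, g (U *ᵥ x) ∂(gaussPi n σ) :=
          lintegral_gaussPi_comp_unitary hσ hUmem g hgm
      _ = ∫⁻ x, ENNReal.ofReal (Real.exp (t * c0)) * ∏ i, ff i (x i) ∂(gaussPi n σ) := by
          exact lintegral_congr fun x => hpoint x
      _ = ENNReal.ofReal (Real.exp (t * c0))
            * ∫⁻ x, ∏ i, ff i (x i) ∂(gaussPi n σ) := by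
          rw [lintegral_const_mul _ (by
            exact Finset.measurable_prod _ fun i _ =>
              (hffm i).comp (measurable_pi_apply i))]
      _ = ENNReal.ofReal (Real.exp (t * c0))
            * ∏ i, ∫⁻ z, ff i z ∂(gaussianReal 0 (Real.toNNReal (σ^2))) := by
          congr 1
          exact lintegral_pi_prod _ (fun _ => inferInstance) _ hffm
      _ ≤ ENNReal.ofReal (Real.exp (t * c0))
            * ∏ i, ENNReal.ofReal
              (Real.exp ((t * lam i)*σ^2 + 4*(t * lam i)^2*σ^4 + (2*t*w i)^2*σ^2)) := by
          exact mul_le_mul_right (Finset.prod_le_prod' fun i _ => hfactor i) _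
      _ = ENNReal.ofReal (Real.exp (t * c0 +
            ∑ i, ((t * lam i)*σ^2 + 4*(t * lam i)^2*σ^4 + (2*t*w i)^2*σ^2))) := by
          rw [← ENNReal.ofReal_prod_of_nonneg (fun i _ => Real.exp_nonneg _),
            ← Real.exp_sum, ← ENNReal.ofReal_mul (Real.exp_nonneg _), ← Real.exp_add]
      _ ≤ ENNReal.ofReal (Real.exp (t * ((n:ℝ) * σ^2)
            + (-(t * ((n:ℝ) * y)) + 8*L*(n:ℝ)*σ^4*t^2))) :=
          ENNReal.ofReal_le_ofReal (Real.exp_le_exp.2 hsum_exp)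
      _ = _ := by rw [Real.exp_add, ENNReal.ofReal_mul (Real.exp_nonneg _)]
  -- Markov/Chernoff step
  have hmarkov := mul_meas_ge_le_lintegral₀ (μ := gaussPi n σ) hgm.aemeasurable
    (ENNReal.ofReal (Real.exp (t * ((n:ℝ) * σ^2))))
  have hchain : ENNReal.ofReal (Real.exp (t * ((n:ℝ) * σ^2)))
      * gaussPi n σ {ε : Fin n → ℝ | ktau n A F σ ε < k}
      ≤ ENNReal.ofReal (Real.exp (t * ((n:ℝ) * σ^2)))
        * ENNReal.ofReal (Real.exp (-(t * ((n:ℝ) * y)) + 8*L*(n:ℝ)*σ^4*t^2)) := by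
    calc ENNReal.ofReal (Real.exp (t * ((n:ℝ) * σ^2)))
        * gaussPi n σ {ε : Fin n → ℝ | ktau n A F σ ε < k}
        ≤ ENNReal.ofReal (Real.exp (t * ((n:ℝ) * σ^2)))
          * gaussPi n σ {ε : Fin n → ℝ |
              ENNReal.ofReal (Real.exp (t * ((n:ℝ) * σ^2))) ≤ g ε} :=
          mul_le_mul_right (measure_mono hsubset) _
      _ ≤ ∫⁻ e, g e ∂(gaussPi n σ) := hmarkov
      _ ≤ _ := hmgf
  have hconst0 : (ENNReal.ofReal (Real.exp (t * ((n:ℝ) * σ^2)))) ≠ 0 := by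
    simp [ENNReal.ofReal_eq_zero, not_le, Real.exp_pos]
  have hconsttop : (ENNReal.ofReal (Real.exp (t * ((n:ℝ) * σ^2)))) ≠ ⊤ :=
    ENNReal.ofReal_ne_top
  have hfin : gaussPi n σ {ε : Fin n → ℝ | ktau n A F σ ε < k}
      ≤ ENNReal.ofReal (Real.exp (-(t * ((n:ℝ) * y)) + 8*L*(n:ℝ)*σ^4*t^2)) :=
    (ENNReal.mul_le_mul_iff_right hconst0 hconsttop).mp hchain
  refine hfin.trans ?_
  apply ENNReal.ofReal_le_ofReal
  rw [hmin]
  have hexp_eq : -(t * ((n:ℝ) * y)) + 8*L*(n:ℝ)*σ^4*t^2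
      = -(1/(32*L)) * (n:ℝ) * (y^2/σ^4) := by
    rw [htdef]
    field_simp
    ring
  rw [hexp_eq]
  nlinarith [Real.exp_pos (-(1/(32*L)) * (n:ℝ) * (y^2/σ^4))]
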